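/- Finite-blocklength converse bound for lossless source coding: let X^n = (X_1,…,X_n) be drawn i.i.d. from a pmf P_X on a finite alphabet 𝒳. For every n, M ∈ ℕ and every γ > 0, every (n,M)-code satisfies P_{e,n} ≥ Pr{ ∑_{i=1}^n ı(X_i|P_X) ≥ log M + nγ } − exp(−nγ). -/

import Mathlib

/-!
Finite-blocklength converse bound for lossless source coding
(Han's information-spectrum bound, Theorem `lossless:converse`).
-/

open scoped BigOperators

noncomputable section

/-- i.i.d. product pmf on length-`n` strings. -/
def iidP {α : Type*} [Fintype α] (p : α → ℝ) (n : ℕ) : (Fin n → α) → ℝ :=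
  fun xs => ∏ i, p (xs i)

/-- Probability of an event under a pmf on a finite space. -/
def Pr {Ω : Type*} [Fintype Ω] (μ : Ω → ℝ) (A : Set Ω) : ℝ :=
  ∑ ω, A.indicator μ ω

/-- Entropy density `ı(x|P) = −log P(x)`. -/
def entDensity {α : Type*} (p : α → ℝ) (x : α) : ℝ := -Real.log (p x)

/-- **Converse bound for lossless source coding.**
For any source pmf `P` on a finite alphabet, any `n, M`, any `γ > 0` and any
`(n,M)`-code `(f,φ)`, the error probability is at least
`Pr{∑ᵢ ı(Xᵢ|P) ≥ log M + nγ} − exp(−nγ)`. -/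
theorem lossless_converse
    {𝒳 : Type} [Fintype 𝒳] (P : 𝒳 → ℝ)
    (hP0 : ∀ x, 0 ≤ P x) (hP1 : ∑ x, P x = 1)
    (n M : ℕ) (γ : ℝ) (hγ : 0 < γ)
    (f : (Fin n → 𝒳) → Fin M) (φ : Fin M → (Fin n → 𝒳)) :
    Pr (iidP P n) {xs | Real.log M + n * γ ≤ ∑ i, entDensity P (xs i)}
        - Real.exp (-(n * γ)) ≤
      Pr (iidP P n) {xs | φ (f xs) ≠ xs} := by
  classical
  set μ := iidP P n with hμdef
  have hμ0 : ∀ x, 0 ≤ μ x := fun x => Finset.prod_nonneg fun i _ => hP0 _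
  have hPr : ∀ S : Set (Fin n → 𝒳), Pr μ S = ∑ x ∈ Finset.univ.filter (· ∈ S), μ x := by
    intro S
    simp [Pr, Finset.sum_filter, Set.indicator_apply]
  by_cases hΩ : Nonempty (Fin n → 𝒳)
  swap
  · have : IsEmpty (Fin n → 𝒳) := not_nonempty_iff.mp hΩ
    simp [Pr]
    positivity
  have hM : 0 < M := Fin.pos (f (Classical.arbitrary _))
  set A : Set (Fin n → 𝒳) := {xs | Real.log M + n * γ ≤ ∑ i, entDensity P (xs i)} with hA
  set SA := Finset.univ.filter (· ∈ A) with hSA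
  set T := SA.filter (fun x => φ (f x) = x) with hT
  -- pointwise bound on T
  have key : ∀ x ∈ T, μ x ≤ Real.exp (-(n * γ)) / M := by
    intro x hx
    rw [hT, Finset.mem_filter, hSA, Finset.mem_filter] at hx
    have hxA : Real.log M + n * γ ≤ ∑ i, entDensity P (x i) := hx.1.2
    by_cases hpos : ∀ i, 0 < P (x i)
    · have hμpos : 0 < μ x := Finset.prod_pos fun i _ => hpos i
      have hlog : Real.log (μ x) = ∑ i, Real.log (P (x i)) :=
        Real.log_prod (fun i _ => (hpos i).ne')
      have hent : ∑ i, entDensity P (x i) = -Real.log (μ x) := by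
        rw [hlog, ← Finset.sum_neg_distrib]
        rfl
      have h1 : Real.log (μ x) ≤ -(Real.log M + n * γ) := by
        rw [hent] at hxA; linarith
      have h2 : μ x ≤ Real.exp (-(Real.log M + n * γ)) := by
        calc μ x = Real.exp (Real.log (μ x)) := (Real.exp_log hμpos).symm
        _ ≤ _ := Real.exp_le_exp.mpr h1
      have h3 : Real.exp (-(Real.log M + n * γ)) = Real.exp (-(n * γ)) / M := by
        rw [neg_add, Real.exp_add, Real.exp_neg, Real.exp_log (by exact_mod_cast hM)]
        ring
      linarith [h2, h3.le]
    · push_neg at hpos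
      obtain ⟨i, hi⟩ := hpos
      have hi0 : P (x i) = 0 := le_antisymm hi (hP0 _)
      have : μ x = 0 := Finset.prod_eq_zero (Finset.mem_univ i) hi0
      rw [this]
      positivity
  -- card bound
  have hcard : (T.card : ℝ) ≤ M := by
    have : T.card ≤ (Finset.univ : Finset (Fin M)).card := by
      apply Finset.card_le_card_of_injOn f (fun a _ => Finset.mem_univ _)
      intro a ha b hb hab
      simp only [hT, Finset.coe_filter, Set.mem_setOf_eq] at ha hb
      calc a = φ (f a) := ha.2.symm
      _ = φ (f b) := by rw [hab]
      _ = b := hb.2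
    simpa using (Nat.cast_le (α := ℝ)).mpr this
  have hTsum : ∑ x ∈ T, μ x ≤ Real.exp (-(n * γ)) := by
    calc ∑ x ∈ T, μ x ≤ T.card • (Real.exp (-(n * γ)) / M) :=
        Finset.sum_le_card_nsmul T μ _ key
    _ = (T.card : ℝ) * (Real.exp (-(n * γ)) / M) := by
        simp [nsmul_eq_mul]
    _ ≤ (M : ℝ) * (Real.exp (-(n * γ)) / M) := by
        apply mul_le_mul_of_nonneg_right hcard
        positivity
    _ = Real.exp (-(n * γ)) := by
        field_simp
  -- decomposition
  have hdecomp : Pr μ A = ∑ x ∈ SA.filter (fun x => φ (f x) = x), μ x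
      + ∑ x ∈ SA.filter (fun x => ¬ φ (f x) = x), μ x := by
    rw [hPr A, ← Finset.sum_filter_add_sum_filter_not SA (fun x => φ (f x) = x) μ]
  have herr : ∑ x ∈ SA.filter (fun x => ¬ φ (f x) = x), μ x
      ≤ Pr μ {xs | φ (f xs) ≠ xs} := by
    rw [hPr]
    apply Finset.sum_le_sum_of_subset_of_nonneg
    · intro x hx
      simp only [Finset.mem_filter, Set.mem_setOf_eq] at hx ⊢
      exact ⟨Finset.mem_univ _, hx.2⟩
    · intro x _ _; exact hμ0 x
  have := hTsum
  rw [← hT] at hdecomp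
  linarith [hdecomp, herr, hTsum]

end
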